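/- arXiv:2211.03901 — 3 statements merged into one kernel-verified Lean document; each statement's English description precedes it below -/
import Mathlib

section
/- Let n ≥ 1 and let λ ≠ 0 be a partition with at most 2n rows such that for every j, the number of boxes in the j-th column of λ is either < j or ≥ n + j. Let i be the largest j such that the j-th column of λ has ≥ n + j boxes (the n-index of λ). Then λ_{i+1} = λ_{i+2} = ⋯ = λ_{i+n} = i. -/
/-- A partition `λ`: `part i` is the `i`-th part `λ_i` (indexed from `1`; `part 0 = 0`),
the parts are weakly decreasing and eventually zero. -/
structure Partn where
  part : ℕ → ℕ
  part_zero : part 0 = 0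
  part_antitone : ∀ ⦃i j : ℕ⦄, 1 ≤ i → i ≤ j → part j ≤ part i
  support_finite : (Function.support part).Finite

namespace Partn

/-- The size `|λ|` of a partition: the sum of its parts. -/
noncomputable def size (l : Partn) : ℕ := ∑ᶠ i, l.part i

/-- The number of boxes in the `j`-th column of the Young diagram of `l`
(for `j ≥ 1`); equivalently the `j`-th part `λ†_j` of the transpose partition. -/
noncomputable def colLen (l : Partn) (j : ℕ) : ℕ :=
  Set.ncard {i : ℕ | 1 ≤ i ∧ j ≤ l.part i}

/-- The cell in row `p.1`, column `p.2` (both indexed from 1) belongs to the skew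
Young diagram `γ/α`. -/
def InSkew (γ α : Partn) (p : ℕ × ℕ) : Prop :=
  1 ≤ p.1 ∧ α.part p.1 < p.2 ∧ p.2 ≤ γ.part p.1

end Partn

/-- A Littlewood–Richardson tableau of shape `γ/α` and content `β`: a semistandard
filling of the skew diagram `γ/α` in which the label `i` occurs `β_i` times, and whose
reverse reading word (rows read right-to-left, top row first) is a lattice word:
every prefix contains at least as many `i`'s as `(i+1)`'s.  A prefix of the reading
word consists of the cells `(r', c')` with `r' < r`, together with those with
`r' = r` and `c' ≥ c`, for some position `(r, c)`. -/
structure LRTableau (α β γ : Partn) where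
  entry : ℕ → ℕ → ℕ
  subset : ∀ i, α.part i ≤ γ.part i
  entry_pos : ∀ r c, Partn.InSkew γ α (r, c) → 1 ≤ entry r c
  row_weak : ∀ r c c', Partn.InSkew γ α (r, c) → Partn.InSkew γ α (r, c') → c ≤ c' →
    entry r c ≤ entry r c'
  col_strict : ∀ r c, Partn.InSkew γ α (r, c) → Partn.InSkew γ α (r + 1, c) →
    entry r c < entry (r + 1) c
  content : ∀ i, 1 ≤ i →
    Set.ncard {p : ℕ × ℕ | Partn.InSkew γ α p ∧ entry p.1 p.2 = i} = β.part i
  lattice : ∀ r c i, 1 ≤ i →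
    Set.ncard {p : ℕ × ℕ | Partn.InSkew γ α p ∧
        (p.1 < r ∨ (p.1 = r ∧ c ≤ p.2)) ∧ entry p.1 p.2 = i + 1} ≤
    Set.ncard {p : ℕ × ℕ | Partn.InSkew γ α p ∧
        (p.1 < r ∨ (p.1 = r ∧ c ≤ p.2)) ∧ entry p.1 p.2 = i}

/-- The Littlewood–Richardson coefficient `c^γ_{α,β}`: the number of
Littlewood–Richardson tableaux of shape `γ/α` and content `β`; equivalently, the
multiplicity of the Schur function `s_γ` in the product `s_α · s_β`. -/
noncomputable def lrCoeff (α β γ : Partn) : ℕ := Nat.card (LRTableau α β γ)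

lemma colLen_ge (l : Partn) {j k : ℕ} (hj : 1 ≤ j) (hk : 1 ≤ k)
    (h : j ≤ l.part k) : k ≤ l.colLen j := by
  have hsub : Set.Icc 1 k ⊆ {m : ℕ | 1 ≤ m ∧ j ≤ l.part m} := by
    rintro m ⟨hm1, hm2⟩
    exact ⟨hm1, h.trans (l.part_antitone hm1 hm2)⟩
  have hfin : {m : ℕ | 1 ≤ m ∧ j ≤ l.part m}.Finite := by
    apply l.support_finite.subset
    rintro m ⟨hm1, hm2⟩
    intro h0
    omega
  calc k = (Set.Icc 1 k).ncard := by rw [← Finset.coe_Icc, Set.ncard_coe_finset, Nat.card_Icc]; omega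
    _ ≤ _ := Set.ncard_le_ncard hsub hfin

lemma colLen_le (l : Partn) {j k : ℕ} (hk : 1 ≤ k)
    (h : l.part k < j) : l.colLen j ≤ k - 1 := by
  have hsub : {m : ℕ | 1 ≤ m ∧ j ≤ l.part m} ⊆ Set.Icc 1 (k - 1) := by
    rintro m ⟨hm1, hm2⟩
    refine ⟨hm1, ?_⟩
    by_contra hc
    have : k ≤ m := by omega
    have := l.part_antitone hk this
    omega
  calc l.colLen j ≤ (Set.Icc 1 (k-1)).ncard := Set.ncard_le_ncard hsub (Set.finite_Icc _ _)
    _ ≤ k - 1 := by rw [← Finset.coe_Icc, Set.ncard_coe_finset, Nat.card_Icc]; omega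

/-- Let `n ≥ 1` and let `λ ≠ 0` be a partition with at most `2n` rows such that for
every `j ≥ 1`, the `j`-th column of `λ` has either `< j` or `≥ n + j` boxes.  If `i`
is the largest `j` such that the `j`-th column has `≥ n + j` boxes (the `n`-index of
`λ`), then `λ_{i+1} = λ_{i+2} = ⋯ = λ_{i+n} = i`. -/
theorem nIndex_middle_parts (n i : ℕ) (l : Partn)
    (hn : 1 ≤ n)
    (hne : l.part 1 ≠ 0)
    (hrows : ∀ j : ℕ, 2 * n < j → l.part j = 0)
    (hstar : ∀ j : ℕ, 1 ≤ j → l.colLen j < j ∨ n + j ≤ l.colLen j)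
    (hi1 : 1 ≤ i) (hi2 : n + i ≤ l.colLen i)
    (hi3 : ∀ j : ℕ, i < j → l.colLen j < n + j) :
    ∀ j : ℕ, i + 1 ≤ j → j ≤ i + n → l.part j = i := by
  intro j hj1 hj2
  have hlow : i ≤ l.part j := by
    by_contra h
    have := colLen_le l (j := i) (k := j) (by omega) (by omega)
    omega
  have hup : l.part (i + 1) ≤ i := by
    by_contra h
    have h1 : i + 1 ≤ l.colLen (i + 1) := colLen_ge l (by omega) (by omega) (by omega)
    have h2 := hstar (i + 1) (by omega)
    have h3 := hi3 (i + 1) (by omega)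
    omega
  have := l.part_antitone (i := i + 1) (j := j) (by omega) (by omega)
  omega
end

section
/- Let λ be a nonzero partition contained in the (2n) × (d−n−1) rectangle with n-index i < n, and let α, β, γ be partitions with at most n rows such that c^λ_{α,β} ≠ 0 and c^γ_{α,β} ≠ 0. Then γ_{i+1} ≥ i. -/
section MyAux

lemma my_skew_finite (γ α : Partn) : {p : ℕ × ℕ | Partn.InSkew γ α p}.Finite := by
  apply Set.Finite.subset (γ.support_finite.prod (Set.finite_Icc 1 (γ.part 1)))
  rintro ⟨r, c⟩ ⟨hr, hac, hcg⟩
  refine ⟨?_, ?_, le_trans hcg (γ.part_antitone le_rfl hr)⟩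
  · simp only [Function.mem_support]
    intro h0
    rw [h0] at hcg
    omega
  · omega

lemma my_subskew_finite (γ α : Partn) {s : Set (ℕ × ℕ)}
    (hs : ∀ p ∈ s, Partn.InSkew γ α p) : s.Finite :=
  (my_skew_finite γ α).subset hs

lemma my_colLen_anti (l : Partn) {j k : ℕ} (hj : 1 ≤ j) (hjk : j ≤ k) :
    l.colLen k ≤ l.colLen j := by
  apply Set.ncard_le_ncard
  · rintro r ⟨h1, h2⟩; exact ⟨h1, le_trans hjk h2⟩
  · apply Set.Finite.subset l.support_finite
    rintro r ⟨h1, h2⟩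
    simp only [Function.mem_support]
    omega

lemma my_le_part_of_le_colLen (l : Partn) {j r : ℕ} (hj : 1 ≤ j) (hr : 1 ≤ r)
    (h : r ≤ l.colLen j) : j ≤ l.part r := by
  by_contra hc
  push_neg at hc
  have hsub : {i : ℕ | 1 ≤ i ∧ j ≤ l.part i} ⊆ Set.Ico 1 r := by
    rintro s ⟨h1, h2⟩
    refine ⟨h1, ?_⟩
    by_contra hs
    push_neg at hs
    have := l.part_antitone hr hs
    omega
  have hle := Set.ncard_le_ncard hsub (Set.finite_Ico 1 r)
  have hico : (Set.Ico 1 r).ncard = r - 1 := by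
    rw [← Finset.coe_Ico, Set.ncard_coe_finset, Nat.card_Ico]
  have hcl : l.colLen j = Set.ncard {i : ℕ | 1 ≤ i ∧ j ≤ l.part i} := rfl
  omega

variable {α β γ : Partn}

lemma my_entry_le {n : ℕ} (T : LRTableau α β γ) (hβn : ∀ j, n < j → β.part j = 0)
    (r c : ℕ) (hp : Partn.InSkew γ α (r, c)) : T.entry r c ≤ n := by
  by_contra hc
  push_neg at hc
  have h1 : 1 ≤ T.entry r c := T.entry_pos r c hp
  have hcont := T.content (T.entry r c) h1
  have hpos : 0 < Set.ncard {p : ℕ × ℕ | Partn.InSkew γ α p ∧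
      T.entry p.1 p.2 = T.entry r c} := by
    refine (Set.ncard_pos (my_subskew_finite γ α ?_)).mpr ⟨(r, c), hp, rfl⟩
    rintro p ⟨h, -⟩; exact h
  rw [hcont] at hpos
  rw [hβn _ hc] at hpos
  omega

lemma my_entry_le_row (T : LRTableau α β γ) :
    ∀ r c, Partn.InSkew γ α (r, c) → T.entry r c ≤ r := by
  intro r
  induction r using Nat.strong_induction_on with
  | _ r IH =>
    intro c hp
    by_contra hc
    push_neg at hc
    have hr1 : 1 ≤ r := hp.1
    have he1 : 1 ≤ T.entry r c := T.entry_pos r c hp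
    have hlat := T.lattice r c (T.entry r c - 1) (by omega)
    have h1 : 0 < Set.ncard {p : ℕ × ℕ | Partn.InSkew γ α p ∧
        (p.1 < r ∨ (p.1 = r ∧ c ≤ p.2)) ∧ T.entry p.1 p.2 = (T.entry r c - 1) + 1} := by
      refine (Set.ncard_pos (my_subskew_finite γ α ?_)).mpr
        ⟨(r, c), hp, Or.inr ⟨rfl, le_rfl⟩,
          (by omega : T.entry r c = T.entry r c - 1 + 1)⟩
      rintro p ⟨h, -⟩; exact h
    have h2 : Set.ncard {p : ℕ × ℕ | Partn.InSkew γ α p ∧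
        (p.1 < r ∨ (p.1 = r ∧ c ≤ p.2)) ∧ T.entry p.1 p.2 = T.entry r c - 1} = 0 := by
      rw [Set.ncard_eq_zero (my_subskew_finite γ α (by rintro p ⟨h, -⟩; exact h))]
      ext p
      simp only [Set.mem_setOf_eq, Set.mem_empty_iff_false, iff_false, not_and]
      rintro hps (h | ⟨h, hcp⟩) hpe
      · have := IH p.1 h p.2 hps
        omega
      · have hw := T.row_weak r c p.2 hp (by rw [← h]; exact hps) hcp
        rw [h] at hpe
        omega
    rw [h2] at hlat
    omega

lemma my_step (T : LRTableau α β γ) {k : ℕ} (hk : 1 ≤ k) (r : ℕ) :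
    Set.ncard {p : ℕ × ℕ | Partn.InSkew γ α p ∧ p.1 ≤ r + 1 ∧ T.entry p.1 p.2 = k + 1} ≤
    Set.ncard {p : ℕ × ℕ | Partn.InSkew γ α p ∧ p.1 ≤ r ∧ T.entry p.1 p.2 = k} := by
  by_cases hne : {c : ℕ | Partn.InSkew γ α (r + 1, c) ∧ T.entry (r + 1) c = k + 1}.Nonempty
  · set c0 := sInf {c : ℕ | Partn.InSkew γ α (r + 1, c) ∧ T.entry (r + 1) c = k + 1} with hc0def
    have hc0 := Nat.sInf_mem hne
    have hlat := T.lattice (r + 1) c0 k hk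
    refine le_trans (le_trans (Set.ncard_le_ncard ?_
        (my_subskew_finite γ α (by rintro p ⟨h, -⟩; exact h))) hlat)
      (Set.ncard_le_ncard ?_ (my_subskew_finite γ α (by rintro p ⟨h, -⟩; exact h)))
    · rintro p ⟨hps, hpr, hpe⟩
      refine ⟨hps, ?_, hpe⟩
      rcases Nat.lt_or_ge p.1 (r + 1) with h | h
      · exact Or.inl h
      · have hp1 : p.1 = r + 1 := by omega
        exact Or.inr ⟨hp1, Nat.sInf_le ⟨by rw [← hp1]; exact hps, by rw [← hp1]; exact hpe⟩⟩
    · rintro p ⟨hps, hpre, hpe⟩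
      refine ⟨hps, ?_, hpe⟩
      rcases hpre with h | ⟨h, hcp⟩
      · omega
      · exfalso
        have hw := T.row_weak (r + 1) c0 p.2 hc0.1 (by rw [← h]; exact hps) hcp
        rw [h] at hpe
        rw [hc0.2] at hw
        omega
  · have hno : ∀ c, ¬ (Partn.InSkew γ α (r + 1, c) ∧ T.entry (r + 1) c = k + 1) :=
      fun c hc => hne ⟨c, hc⟩
    have hlat := T.lattice (r + 1) (γ.part (r + 1) + 1) k hk
    refine le_trans (le_trans (Set.ncard_le_ncard ?_
        (my_subskew_finite γ α (by rintro p ⟨h, -⟩; exact h))) hlat)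
      (Set.ncard_le_ncard ?_ (my_subskew_finite γ α (by rintro p ⟨h, -⟩; exact h)))
    · rintro p ⟨hps, hpr, hpe⟩
      refine ⟨hps, ?_, hpe⟩
      left
      rcases Nat.lt_or_ge p.1 (r + 1) with h | h
      · exact h
      · exfalso
        have hp1 : p.1 = r + 1 := by omega
        exact hno p.2 ⟨by rw [← hp1]; exact hps, by rw [← hp1]; exact hpe⟩
    · rintro p ⟨hps, hpre, hpe⟩
      refine ⟨hps, ?_, hpe⟩
      rcases hpre with h | ⟨h, hcp⟩
      · omega
      · exfalso
        have := hps.2.2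
        rw [h] at this
        omega

lemma my_chain (T : LRTableau α β γ) {a b : ℕ} (ha : 1 ≤ a) (hab : a ≤ b) :
    Set.ncard {p : ℕ × ℕ | Partn.InSkew γ α p ∧ p.1 ≤ b ∧ T.entry p.1 p.2 = b} ≤
    Set.ncard {p : ℕ × ℕ | Partn.InSkew γ α p ∧ p.1 ≤ a ∧ T.entry p.1 p.2 = a} := by
  induction b, hab using Nat.le_induction with
  | base => exact le_rfl
  | succ b hb IH => exact le_trans (my_step T (by omega) b) IH

end MyAux


/-- Let `λ` be a nonzero partition contained in the `(2n) × (d−n−1)` rectangle with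
`n`-index `i < n`, and let `α`, `β`, `γ` be partitions with at most `n` rows such
that `c^λ_{α,β} ≠ 0` and `c^γ_{α,β} ≠ 0`.  Then `γ_{i+1} ≥ i`. -/
theorem gamma_succ_ge (n d i : ℕ) (l α β γ : Partn)
    (hnd : n < d)
    (hin : i < n)
    (hne : l.part 1 ≠ 0)
    (hrows : ∀ j : ℕ, 2 * n < j → l.part j = 0)
    (hcols : ∀ j : ℕ, 1 ≤ j → l.part j ≤ d - n - 1)
    (hstar : ∀ j : ℕ, 1 ≤ j → l.colLen j < j ∨ n + j ≤ l.colLen j)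
    (hi1 : 1 ≤ i) (hi2 : n + i ≤ l.colLen i)
    (hi3 : ∀ j : ℕ, i < j → l.colLen j < n + j)
    (hα : ∀ j : ℕ, n < j → α.part j = 0)
    (hβ : ∀ j : ℕ, n < j → β.part j = 0)
    (hγ : ∀ j : ℕ, n < j → γ.part j = 0)
    (hlr : lrCoeff α β l ≠ 0) (hγc : lrCoeff α β γ ≠ 0) :
    i ≤ γ.part (i + 1) := by
  obtain ⟨T⟩ : Nonempty (LRTableau α β l) := (Nat.card_ne_zero.mp hlr).1
  obtain ⟨S⟩ : Nonempty (LRTableau α β γ) := (Nat.card_ne_zero.mp hγc).1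
  -- Part A: β_n ≥ i - α_{i+1}
  have hskewA : ∀ j, α.part (i + 1) < j → j ≤ i → ∀ k, 1 ≤ k → k ≤ n →
      Partn.InSkew l α (i + k, j) := by
    intro j hj1 hj2 k hk1 hk2
    have hj0 : 1 ≤ j := by omega
    refine ⟨by omega, ?_, ?_⟩
    · have := α.part_antitone (by omega : 1 ≤ i + 1) (by omega : i + 1 ≤ i + k)
      simp only at this ⊢
      omega
    · show j ≤ l.part (i + k)
      apply my_le_part_of_le_colLen l hj0 (by omega)
      calc i + k ≤ n + i := by omega
        _ ≤ l.colLen i := hi2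
        _ ≤ l.colLen j := my_colLen_anti l hj0 hj2
  have hAn : ∀ j, α.part (i + 1) < j → j ≤ i → T.entry (i + n) j = n := by
    intro j hj1 hj2
    have hchain : ∀ k, 1 ≤ k → k ≤ n → k ≤ T.entry (i + k) j := by
      intro k
      induction k with
      | zero => omega
      | succ m IH =>
        intro _ hm
        by_cases hm0 : m = 0
        · subst hm0
          exact T.entry_pos (i + 1) j (hskewA j hj1 hj2 1 le_rfl hm)
        · have h1 := IH (by omega) (by omega)
          have h2 := T.col_strict (i + m) j (hskewA j hj1 hj2 m (by omega) (by omega))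
            (hskewA j hj1 hj2 (m + 1) (by omega) hm)
          show m + 1 ≤ T.entry (i + m + 1) j
          omega
    have hle := my_entry_le T hβ (i + n) j (hskewA j hj1 hj2 n (by omega) le_rfl)
    have hge := hchain n (by omega) le_rfl
    omega
  have hcardA : i - α.part (i + 1) ≤ β.part n := by
    rw [← T.content n (by omega)]
    have himg : (fun j => ((i + n, j) : ℕ × ℕ)) '' Set.Ioc (α.part (i + 1)) i ⊆
        {p : ℕ × ℕ | Partn.InSkew l α p ∧ T.entry p.1 p.2 = n} := by
      rintro _ ⟨j, ⟨hj1, hj2⟩, rfl⟩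
      exact ⟨hskewA j hj1 hj2 n (by omega) le_rfl, hAn j hj1 hj2⟩
    calc i - α.part (i + 1) = (Set.Ioc (α.part (i + 1)) i).ncard := by
          rw [← Finset.coe_Ioc, Set.ncard_coe_finset, Nat.card_Ioc]
      _ = ((fun j => ((i + n, j) : ℕ × ℕ)) '' Set.Ioc (α.part (i + 1)) i).ncard :=
          (Set.ncard_image_of_injective _ (fun a b h => by simpa using h)).symm
      _ ≤ _ := Set.ncard_le_ncard himg (my_subskew_finite l α (by rintro p ⟨h, -⟩; exact h))
  -- Part B: β_n ≤ γ_{i+1} - α_{i+1}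
  have hβA : β.part n ≤ Set.ncard {p : ℕ × ℕ | Partn.InSkew γ α p ∧ p.1 ≤ i + 1 ∧
      S.entry p.1 p.2 = i + 1} := by
    have hc := S.content n (by omega)
    have heq : {p : ℕ × ℕ | Partn.InSkew γ α p ∧ S.entry p.1 p.2 = n} =
        {p : ℕ × ℕ | Partn.InSkew γ α p ∧ p.1 ≤ n ∧ S.entry p.1 p.2 = n} := by
      ext p
      simp only [Set.mem_setOf_eq]
      constructor
      · rintro ⟨hps, hpe⟩
        refine ⟨hps, ?_, hpe⟩
        by_contra hpn
        push_neg at hpn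
        have h0 := hγ p.1 hpn
        have := hps.2.2
        have := hps.2.1
        omega
      · rintro ⟨hps, -, hpe⟩; exact ⟨hps, hpe⟩
    rw [← hc, heq]
    exact my_chain S (by omega) (by omega)
  have hbound : Set.ncard {p : ℕ × ℕ | Partn.InSkew γ α p ∧ p.1 ≤ i + 1 ∧
      S.entry p.1 p.2 = i + 1} ≤ γ.part (i + 1) - α.part (i + 1) := by
    have hsub : {p : ℕ × ℕ | Partn.InSkew γ α p ∧ p.1 ≤ i + 1 ∧ S.entry p.1 p.2 = i + 1} ⊆
        (fun c => ((i + 1 : ℕ), c)) '' Set.Ioc (α.part (i + 1)) (γ.part (i + 1)) := by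
      rintro ⟨r, c⟩ ⟨hps, hpr, hpe⟩
      have h1 := my_entry_le_row S r c hps
      simp only at hpr hpe h1
      have hr : r = i + 1 := by omega
      subst hr
      exact ⟨c, ⟨hps.2.1, hps.2.2⟩, rfl⟩
    calc _ ≤ ((fun c => ((i + 1 : ℕ), c)) '' Set.Ioc (α.part (i + 1)) (γ.part (i + 1))).ncard :=
          Set.ncard_le_ncard hsub ((Set.finite_Ioc _ _).image _)
      _ = (Set.Ioc (α.part (i + 1)) (γ.part (i + 1))).ncard :=
          Set.ncard_image_of_injective _ (fun a b h => by simpa using h)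
      _ = γ.part (i + 1) - α.part (i + 1) := by
          rw [← Finset.coe_Ioc, Set.ncard_coe_finset, Nat.card_Ioc]
  have hαγ := S.subset (i + 1)
  omega
end

section
/- Let A = 1 + a_1 q + a_2 q^2 + ⋯ and B = 1 + b_1 q + b_2 q^2 + ⋯ be formal power series over a commutative Q-algebra. If for every n ≥ 1 the coefficients [q^n](A·B^{ℓ+1}) are known for all ℓ ≥ n, then A and B are uniquely determined; more precisely, if A·B^{ℓ+1} = A'·B'^{ℓ+1} modulo q^{n+1} for all ℓ ≥ n and all n, then A = A' and B = B'. -/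
open PowerSeries

private lemma coeff_mul_congr {R : Type*} [CommRing R] {F F' G G' : R⟦X⟧} {n : ℕ}
    (hF : ∀ j ≤ n, coeff j F = coeff j F')
    (hG : ∀ j ≤ n, coeff j G = coeff j G') :
    ∀ j ≤ n, coeff j (F * G) = coeff j (F' * G') := by
  intro j hj
  rw [coeff_mul, coeff_mul]
  refine Finset.sum_congr rfl ?_
  intro p hp
  rw [Finset.HasAntidiagonal.mem_antidiagonal] at hp
  rw [hF p.1 (by omega), hG p.2 (by omega)]

private lemma coeff_pow_congr {R : Type*} [CommRing R] {F F' : R⟦X⟧} {n : ℕ}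
    (hF : ∀ j ≤ n, coeff j F = coeff j F') (k : ℕ) :
    ∀ j ≤ n, coeff j (F ^ k) = coeff j (F' ^ k) := by
  induction k with
  | zero => simp
  | succ k ih =>
    intro j hj
    rw [pow_succ, pow_succ]
    exact coeff_mul_congr ih hF j hj

/-- **Uniqueness of the universal series.**
Let `A = 1 + a₁ q + a₂ q² + ⋯` and `B = 1 + b₁ q + b₂ q² + ⋯` be formal power series
over a commutative `ℚ`-algebra, and similarly `A'`, `B'`.  If for every `n` and
every `ℓ ≥ n` the products `A·B^{ℓ+1}` and `A'·B'^{ℓ+1}` agree modulo `q^{n+1}`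
(i.e. their coefficients agree in degrees `≤ n`), then `A = A'` and `B = B'`:
the coefficients `[qⁿ](A·B^{ℓ+1})` for `ℓ ≥ n` determine `A` and `B` uniquely. -/
theorem powerSeries_unique_of_coeffs (R : Type*) [CommRing R] [Algebra ℚ R]
    (A A' B B' : R⟦X⟧)
    (hA : constantCoeff A = 1) (hA' : constantCoeff A' = 1)
    (hB : constantCoeff B = 1) (hB' : constantCoeff B' = 1)
    (h : ∀ n ℓ : ℕ, n ≤ ℓ → ∀ m : ℕ, m ≤ n →
      coeff m (A * B ^ (ℓ + 1)) = coeff m (A' * B' ^ (ℓ + 1))) :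
    A = A' ∧ B = B' := by
  have main : ∀ n, coeff n A = coeff n A' ∧ coeff n B = coeff n B' := by
    intro n
    induction n using Nat.strong_induction_on with
    | _ n ih =>
    rcases Nat.eq_zero_or_pos n with rfl | hn
    · simp [coeff_zero_eq_constantCoeff, hA, hA', hB, hB']
    -- Step 1: coeff n B = coeff n B'
    have hc0 : constantCoeff (A * B ^ (n + 1)) = 1 := by
      simp [map_mul, map_pow, hA, hB]
    have hc0' : constantCoeff (A' * B' ^ (n + 1)) = 1 := by
      simp [map_mul, map_pow, hA', hB']
    have hBn : coeff n B = coeff n B' := by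
      have h2 : coeff n ((A * B ^ (n + 1)) * B)
          = coeff n ((A' * B' ^ (n + 1)) * B') := by
        have := h n (n + 1) (by omega) n le_rfl
        have e1 : A * B ^ (n + 1 + 1) = (A * B ^ (n + 1)) * B := by ring
        have e2 : A' * B' ^ (n + 1 + 1) = (A' * B' ^ (n + 1)) * B' := by ring
        rwa [e1, e2] at this
      rw [coeff_mul, coeff_mul] at h2
      have hmem : ((0 : ℕ), n) ∈ Finset.HasAntidiagonal.antidiagonal n := by
        rw [Finset.HasAntidiagonal.mem_antidiagonal]; omega
      rw [← Finset.add_sum_erase _ _ hmem, ← Finset.add_sum_erase _ _ hmem] at h2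
      have hrest : ∑ p ∈ (Finset.HasAntidiagonal.antidiagonal n).erase (0, n),
            coeff p.1 (A * B ^ (n + 1)) * coeff p.2 B
          = ∑ p ∈ (Finset.HasAntidiagonal.antidiagonal n).erase (0, n),
            coeff p.1 (A' * B' ^ (n + 1)) * coeff p.2 B' := by
        refine Finset.sum_congr rfl ?_
        intro p hp
        rw [Finset.mem_erase, Finset.HasAntidiagonal.mem_antidiagonal] at hp
        have hp2 : p.2 < n := by
          rcases hp with ⟨hne, hsum⟩
          rcases Nat.lt_or_ge p.2 n with h' | h'
          · exact h'
          · exfalso; apply hne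
            have : p.2 = n := by omega
            have : p.1 = 0 := by omega
            exact Prod.ext this (by omega)
        rw [h n n le_rfl p.1 (by omega), (ih p.2 hp2).2]
      rw [hrest] at h2
      have := add_right_cancel h2
      simpa [coeff_zero_eq_constantCoeff, hc0, hc0'] using this
    -- Step 2: coeff n A = coeff n A'
    have hBeq : ∀ j ≤ n, coeff j B = coeff j B' := by
      intro j hj
      rcases Nat.lt_or_ge j n with h' | h'
      · exact (ih j h').2
      · have : j = n := by omega
        rw [this]; exact hBn
    have hAn : coeff n A = coeff n A' := by
      have h2 : coeff n (A * B ^ (n + 1)) = coeff n (A' * B' ^ (n + 1)) :=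
        h n n le_rfl n le_rfl
      rw [coeff_mul, coeff_mul] at h2
      have hmem : ((n : ℕ), 0) ∈ Finset.HasAntidiagonal.antidiagonal n := by
        rw [Finset.HasAntidiagonal.mem_antidiagonal]; omega
      rw [← Finset.add_sum_erase _ _ hmem, ← Finset.add_sum_erase _ _ hmem] at h2
      have hrest : ∑ p ∈ (Finset.HasAntidiagonal.antidiagonal n).erase (n, 0),
            coeff p.1 A * coeff p.2 (B ^ (n + 1))
          = ∑ p ∈ (Finset.HasAntidiagonal.antidiagonal n).erase (n, 0),
            coeff p.1 A' * coeff p.2 (B' ^ (n + 1)) := by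
        refine Finset.sum_congr rfl ?_
        intro p hp
        rw [Finset.mem_erase, Finset.HasAntidiagonal.mem_antidiagonal] at hp
        have hp1 : p.1 < n := by
          rcases hp with ⟨hne, hsum⟩
          rcases Nat.lt_or_ge p.1 n with h' | h'
          · exact h'
          · exfalso; apply hne
            have h1 : p.1 = n := by omega
            exact Prod.ext h1 (by omega)
        rw [(ih p.1 hp1).1, coeff_pow_congr hBeq (n + 1) p.2 (by omega)]
      rw [hrest] at h2
      have := add_right_cancel h2
      have hd0 : constantCoeff (B ^ (n + 1)) = 1 := by simp [map_pow, hB]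
      have hd0' : constantCoeff (B' ^ (n + 1)) = 1 := by simp [map_pow, hB']
      simpa [coeff_zero_eq_constantCoeff, hd0, hd0'] using this
    exact ⟨hAn, hBn⟩
  constructor <;> ext n
  · exact (main n).1
  · exact (main n).2
end
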